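/- Exactly 27 K-types of the real group F₄₍₋₂₀₎ are u-small; that is, the set of quadruples (m₁,m₂,m₃,m₄) ∈ ℕ⁴ such that m₁ϖ₁+m₂ϖ₂+m₃ϖ₃+m₄ϖ₄ lies in the zonotope { Σ_{α ∈ Δ(p)} c_α α : 0 ≤ c_α ≤ 1 for each α ∈ Δ(p) } has exactly 27 elements. -/

import Mathlib

/-!
Exactly 27 K-types of F₄₍₋₂₀₎ are unitarily small.
-/

noncomputable section

namespace Stmt7

abbrev V4 : Type := EuclideanSpace ℝ (Fin 4)

def e (i : Fin 4) : V4 := EuclideanSpace.single i 1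

def vec (a b c d : ℝ) : V4 := (WithLp.equiv 2 (Fin 4 → ℝ)).symm ![a, b, c, d]

/-- The root system of type `F₄` in `ℝ⁴`. -/
def ΔF4 : Set V4 :=
  {v | (∃ i, v = e i ∨ v = -e i) ∨
       (∃ i j, i < j ∧ (v = e i + e j ∨ v = e i - e j ∨ v = -e i + e j ∨ v = -e i - e j)) ∨
       (∃ s : Fin 4 → ℝ, (∀ i, s i = 1 ∨ s i = -1) ∧ v = (1 / 2 : ℝ) • ∑ i, s i • e i)}

/-- The compact roots for F₄₍₋₂₀₎: the integral vectors of `ΔF4` (type B₄). -/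
def Δk : Set V4 := {v ∈ ΔF4 | ∀ i, ∃ n : ℤ, v i = (n : ℝ)}

/-- The noncompact roots: the 16 vectors `(±e₁±e₂±e₃±e₄)/2`. -/
def Δp : Set V4 := ΔF4 \ Δk

/-- The fundamental weights `ϖ₁=e₁, ϖ₂=e₁+e₂, ϖ₃=e₁+e₂+e₃, ϖ₄=(e₁+e₂+e₃+e₄)/2`. -/
def ϖ : Fin 4 → V4 :=
  ![vec 1 0 0 0, vec 1 1 0 0, vec 1 1 1 0, vec (1/2) (1/2) (1/2) (1/2)]

/-- The K-type `m₁ϖ₁ + m₂ϖ₂ + m₃ϖ₃ + m₄ϖ₄`. -/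
def mu (m : Fin 4 → ℕ) : V4 := ∑ i, (m i : ℝ) • ϖ i

/-- `μ` is u-small: it lies in the zonotope
`{Σ_{α ∈ Δ(p)} c_α α : 0 ≤ c_α ≤ 1}`. -/
def USmall (μ : V4) : Prop :=
  ∃ c : V4 → ℝ, (∀ α ∈ Δp, 0 ≤ c α ∧ c α ≤ 1) ∧ μ = ∑ᶠ α ∈ Δp, c α • α

/-! ### Auxiliary machinery -/

def w (k : Fin 16) : V4 :=
  (WithLp.equiv 2 (Fin 4 → ℝ)).symm (fun i => if Nat.testBit k i then (1/2 : ℝ) else -(1/2))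

lemma w_apply (k : Fin 16) (i : Fin 4) :
    w k i = if Nat.testBit k i then (1/2 : ℝ) else -(1/2) := rfl

lemma e_apply (i j : Fin 4) : e i j = if j = i then 1 else 0 := by
  simp [e, EuclideanSpace.single_apply]

lemma key16 : ∀ k k' : Fin 16,
    (∀ i : Fin 4, Nat.testBit k.val i.val = Nat.testBit k'.val i.val) → k = k' := by decide

lemma w_inj : Function.Injective w := by
  intro k k' h
  apply key16
  intro i
  have hi : (if Nat.testBit k i then (1/2:ℝ) else -(1/2))
      = (if Nat.testBit k' i then (1/2:ℝ) else -(1/2)) := congrArg (fun v : V4 => v i) h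
  by_cases h1 : Nat.testBit k i <;> by_cases h2 : Nat.testBit k' i <;>
    simp [h1, h2] at hi ⊢ <;> norm_num at hi

lemma third_coord (s : Fin 4 → ℝ) (j : Fin 4) :
    ((1 / 2 : ℝ) • ∑ i, s i • e i) j = s j / 2 := by
  simp [e, Fin.sum_univ_four, EuclideanSpace.single_apply]
  fin_cases j <;> simp <;> ring

lemma Δp_eq : Δp = Set.range w := by
  ext v
  constructor
  · rintro ⟨hv, hnk⟩
    rcases hv with ⟨i, h | h⟩ | ⟨i, j, hij, h | h | h | h⟩ | ⟨s, hs, h⟩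
    · exact absurd ⟨Or.inl ⟨i, Or.inl h⟩, fun j => ⟨if j = i then 1 else 0, by
        subst h; rw [e_apply]; split_ifs <;> norm_num⟩⟩ hnk
    · exact absurd ⟨Or.inl ⟨i, Or.inr h⟩, fun j => ⟨if j = i then -1 else 0, by
        subst h; show -(e i j) = _; rw [e_apply]; split_ifs <;> norm_num⟩⟩ hnk
    · exact absurd ⟨Or.inr (Or.inl ⟨i, j, hij, Or.inl h⟩), fun l => ⟨(if l = i then 1 else 0) + (if l = j then 1 else 0), by
        subst h; show e i l + e j l = _; rw [e_apply, e_apply]; split_ifs <;> norm_num⟩⟩ hnk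
    · exact absurd ⟨Or.inr (Or.inl ⟨i, j, hij, Or.inr (Or.inl h)⟩), fun l => ⟨(if l = i then 1 else 0) + (if l = j then -1 else 0), by
        subst h; show e i l - e j l = _; rw [e_apply, e_apply]; split_ifs <;> norm_num⟩⟩ hnk
    · exact absurd ⟨Or.inr (Or.inl ⟨i, j, hij, Or.inr (Or.inr (Or.inl h))⟩), fun l => ⟨(if l = i then -1 else 0) + (if l = j then 1 else 0), by
        subst h; show -(e i l) + e j l = _; rw [e_apply, e_apply]; split_ifs <;> norm_num⟩⟩ hnk
    · exact absurd ⟨Or.inr (Or.inl ⟨i, j, hij, Or.inr (Or.inr (Or.inr h))⟩), fun l => ⟨(if l = i then -1 else 0) + (if l = j then -1 else 0), by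
        subst h; show -(e i l) - e j l = _; rw [e_apply, e_apply]; split_ifs <;> norm_num⟩⟩ hnk
    · subst h
      rcases hs 0 with h0 | h0 <;> rcases hs 1 with h1 | h1 <;> rcases hs 2 with h2 | h2 <;> rcases hs 3 with h3 | h3
      · exact ⟨15, by ext j; rw [third_coord, w_apply]; fin_cases j <;> simp +decide [h0,h1,h2,h3]⟩
      · exact ⟨7, by ext j; rw [third_coord, w_apply]; fin_cases j <;> simp +decide [h0,h1,h2,h3] <;> norm_num⟩
      · exact ⟨11, by ext j; rw [third_coord, w_apply]; fin_cases j <;> simp +decide [h0,h1,h2,h3] <;> norm_num⟩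
      · exact ⟨3, by ext j; rw [third_coord, w_apply]; fin_cases j <;> simp +decide [h0,h1,h2,h3] <;> norm_num⟩
      · exact ⟨13, by ext j; rw [third_coord, w_apply]; fin_cases j <;> simp +decide [h0,h1,h2,h3] <;> norm_num⟩
      · exact ⟨5, by ext j; rw [third_coord, w_apply]; fin_cases j <;> simp +decide [h0,h1,h2,h3] <;> norm_num⟩
      · exact ⟨9, by ext j; rw [third_coord, w_apply]; fin_cases j <;> simp +decide [h0,h1,h2,h3] <;> norm_num⟩
      · exact ⟨1, by ext j; rw [third_coord, w_apply]; fin_cases j <;> simp +decide [h0,h1,h2,h3] <;> norm_num⟩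
      · exact ⟨14, by ext j; rw [third_coord, w_apply]; fin_cases j <;> simp +decide [h0,h1,h2,h3] <;> norm_num⟩
      · exact ⟨6, by ext j; rw [third_coord, w_apply]; fin_cases j <;> simp +decide [h0,h1,h2,h3] <;> norm_num⟩
      · exact ⟨10, by ext j; rw [third_coord, w_apply]; fin_cases j <;> simp +decide [h0,h1,h2,h3] <;> norm_num⟩
      · exact ⟨2, by ext j; rw [third_coord, w_apply]; fin_cases j <;> simp +decide [h0,h1,h2,h3] <;> norm_num⟩
      · exact ⟨12, by ext j; rw [third_coord, w_apply]; fin_cases j <;> simp +decide [h0,h1,h2,h3] <;> norm_num⟩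
      · exact ⟨4, by ext j; rw [third_coord, w_apply]; fin_cases j <;> simp +decide [h0,h1,h2,h3] <;> norm_num⟩
      · exact ⟨8, by ext j; rw [third_coord, w_apply]; fin_cases j <;> simp +decide [h0,h1,h2,h3] <;> norm_num⟩
      · exact ⟨0, by ext j; rw [third_coord, w_apply]; fin_cases j <;> simp +decide [h0,h1,h2,h3] <;> norm_num⟩
  · rintro ⟨k, rfl⟩
    refine ⟨Or.inr (Or.inr ⟨fun i => if Nat.testBit k i then 1 else -1, fun i => by dsimp only; split_ifs <;> simp, ?_⟩), ?_⟩
    · ext j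
      rw [third_coord, w_apply]
      dsimp only
      split_ifs <;> norm_num
    · rintro ⟨-, hint⟩
      obtain ⟨n, hn⟩ := hint 0
      rw [w_apply] at hn
      split_ifs at hn
      · have h2 : (2 * n : ℤ) = 1 := by
          have : (2 : ℝ) * n = 1 := by linarith
          exact_mod_cast this
        omega
      · have h2 : (2 * n : ℤ) = -1 := by
          have : (2 : ℝ) * n = -1 := by linarith
          exact_mod_cast this
        omega

lemma sum16 (f : Fin 16 → ℝ) : ∑ k, f k = f 0 + f 1 + f 2 + f 3 + f 4 + f 5 + f 6 + f 7
    + f 8 + f 9 + f 10 + f 11 + f 12 + f 13 + f 14 + f 15 := by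
  simp [Fin.sum_univ_succ]
  ring

lemma sum_apply16 (F : Fin 16 → V4) (j : Fin 4) : (∑ k, F k) j = ∑ k, F k j :=
  by rw [WithLp.ofLp_sum]; exact Finset.sum_apply j Finset.univ _

lemma V4_ext {u v : V4} (h0 : u 0 = v 0) (h1 : u 1 = v 1) (h2 : u 2 = v 2)
    (h3 : u 3 = v 3) : u = v := by
  ext j; fin_cases j <;> [exact h0; exact h1; exact h2; exact h3]

lemma sumw (d : Fin 16 → ℝ) (j : Fin 4) :
    (∑ k, d k • w k) j = ∑ k, d k * w k j := by
  rw [sum_apply16]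
  congr 1

lemma usmall_iff (μ : V4) :
    USmall μ ↔ ∃ d : Fin 16 → ℝ, (∀ k, 0 ≤ d k ∧ d k ≤ 1) ∧ μ = ∑ k, d k • w k := by
  constructor
  · rintro ⟨c, hc, rfl⟩
    refine ⟨fun k => c (w k), fun k => hc _ (Δp_eq ▸ Set.mem_range_self k), ?_⟩
    rw [Δp_eq, finsum_mem_range w_inj, finsum_eq_sum_of_fintype]
  · rintro ⟨d, hd, rfl⟩
    classical
    set c : V4 → ℝ := fun v => if h : ∃ k, w k = v then d h.choose else 0 with hc
    have hck : ∀ k, c (w k) = d k := by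
      intro k
      rw [hc]
      dsimp only
      rw [dif_pos ⟨k, rfl⟩]
      exact congrArg d (w_inj (Exists.choose_spec (⟨k, rfl⟩ : ∃ k', w k' = w k)))
    refine ⟨c, ?_, ?_⟩
    · intro α hα
      rw [Δp_eq] at hα
      obtain ⟨k, rfl⟩ := hα
      rw [hck]
      exact hd k
    · rw [Δp_eq, finsum_mem_range w_inj, finsum_eq_sum_of_fintype]
      exact Finset.sum_congr rfl fun k _ => by rw [hck]

lemma mu_apply (m : Fin 4 → ℕ) :
    mu m 0 = (m 0 : ℝ) + m 1 + m 2 + (m 3) / 2 ∧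
    mu m 1 = (m 1 : ℝ) + m 2 + (m 3) / 2 ∧
    mu m 2 = (m 2 : ℝ) + (m 3) / 2 ∧
    mu m 3 = (m 3 : ℝ) / 2 := by
  refine ⟨?_, ?_, ?_, ?_⟩ <;>
  · show (∑ i, (m i : ℝ) • ϖ i) _ = _
    rw [WithLp.ofLp_sum, Finset.sum_apply _ Finset.univ]
    simp [Fin.sum_univ_four, ϖ, vec]
    ring

def mk16 (d0 : ℝ) (d1 : ℝ) (d2 : ℝ) (d3 : ℝ) (d4 : ℝ) (d5 : ℝ) (d6 : ℝ) (d7 : ℝ) (d8 : ℝ) (d9 : ℝ) (d10 : ℝ) (d11 : ℝ) (d12 : ℝ) (d13 : ℝ) (d14 : ℝ) (d15 : ℝ) : Fin 16 → ℝ := fun k : Fin 16 => if k = 0 then d0 else if k = 1 then d1 else if k = 2 then d2 else if k = 3 then d3 else if k = 4 then d4 else if k = 5 then d5 else if k = 6 then d6 else if k = 7 then d7 else if k = 8 then d8 else if k = 9 then d9 else if k = 10 then d10 else if k = 11 then d11 else if k = 12 then d12 else if k = 13 then d13 else if k = 14 then d14 else d15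

@[simp] lemma mk16_0 (d0 : ℝ) (d1 : ℝ) (d2 : ℝ) (d3 : ℝ) (d4 : ℝ) (d5 : ℝ) (d6 : ℝ) (d7 : ℝ) (d8 : ℝ) (d9 : ℝ) (d10 : ℝ) (d11 : ℝ) (d12 : ℝ) (d13 : ℝ) (d14 : ℝ) (d15 : ℝ) : mk16 d0 d1 d2 d3 d4 d5 d6 d7 d8 d9 d10 d11 d12 d13 d14 d15 0 = d0 := rfl
@[simp] lemma mk16_1 (d0 : ℝ) (d1 : ℝ) (d2 : ℝ) (d3 : ℝ) (d4 : ℝ) (d5 : ℝ) (d6 : ℝ) (d7 : ℝ) (d8 : ℝ) (d9 : ℝ) (d10 : ℝ) (d11 : ℝ) (d12 : ℝ) (d13 : ℝ) (d14 : ℝ) (d15 : ℝ) : mk16 d0 d1 d2 d3 d4 d5 d6 d7 d8 d9 d10 d11 d12 d13 d14 d15 1 = d1 := rfl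
@[simp] lemma mk16_2 (d0 : ℝ) (d1 : ℝ) (d2 : ℝ) (d3 : ℝ) (d4 : ℝ) (d5 : ℝ) (d6 : ℝ) (d7 : ℝ) (d8 : ℝ) (d9 : ℝ) (d10 : ℝ) (d11 : ℝ) (d12 : ℝ) (d13 : ℝ) (d14 : ℝ) (d15 : ℝ) : mk16 d0 d1 d2 d3 d4 d5 d6 d7 d8 d9 d10 d11 d12 d13 d14 d15 2 = d2 := rfl
@[simp] lemma mk16_3 (d0 : ℝ) (d1 : ℝ) (d2 : ℝ) (d3 : ℝ) (d4 : ℝ) (d5 : ℝ) (d6 : ℝ) (d7 : ℝ) (d8 : ℝ) (d9 : ℝ) (d10 : ℝ) (d11 : ℝ) (d12 : ℝ) (d13 : ℝ) (d14 : ℝ) (d15 : ℝ) : mk16 d0 d1 d2 d3 d4 d5 d6 d7 d8 d9 d10 d11 d12 d13 d14 d15 3 = d3 := rfl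
@[simp] lemma mk16_4 (d0 : ℝ) (d1 : ℝ) (d2 : ℝ) (d3 : ℝ) (d4 : ℝ) (d5 : ℝ) (d6 : ℝ) (d7 : ℝ) (d8 : ℝ) (d9 : ℝ) (d10 : ℝ) (d11 : ℝ) (d12 : ℝ) (d13 : ℝ) (d14 : ℝ) (d15 : ℝ) : mk16 d0 d1 d2 d3 d4 d5 d6 d7 d8 d9 d10 d11 d12 d13 d14 d15 4 = d4 := rfl
@[simp] lemma mk16_5 (d0 : ℝ) (d1 : ℝ) (d2 : ℝ) (d3 : ℝ) (d4 : ℝ) (d5 : ℝ) (d6 : ℝ) (d7 : ℝ) (d8 : ℝ) (d9 : ℝ) (d10 : ℝ) (d11 : ℝ) (d12 : ℝ) (d13 : ℝ) (d14 : ℝ) (d15 : ℝ) : mk16 d0 d1 d2 d3 d4 d5 d6 d7 d8 d9 d10 d11 d12 d13 d14 d15 5 = d5 := rfl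
@[simp] lemma mk16_6 (d0 : ℝ) (d1 : ℝ) (d2 : ℝ) (d3 : ℝ) (d4 : ℝ) (d5 : ℝ) (d6 : ℝ) (d7 : ℝ) (d8 : ℝ) (d9 : ℝ) (d10 : ℝ) (d11 : ℝ) (d12 : ℝ) (d13 : ℝ) (d14 : ℝ) (d15 : ℝ) : mk16 d0 d1 d2 d3 d4 d5 d6 d7 d8 d9 d10 d11 d12 d13 d14 d15 6 = d6 := rfl
@[simp] lemma mk16_7 (d0 : ℝ) (d1 : ℝ) (d2 : ℝ) (d3 : ℝ) (d4 : ℝ) (d5 : ℝ) (d6 : ℝ) (d7 : ℝ) (d8 : ℝ) (d9 : ℝ) (d10 : ℝ) (d11 : ℝ) (d12 : ℝ) (d13 : ℝ) (d14 : ℝ) (d15 : ℝ) : mk16 d0 d1 d2 d3 d4 d5 d6 d7 d8 d9 d10 d11 d12 d13 d14 d15 7 = d7 := rfl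
@[simp] lemma mk16_8 (d0 : ℝ) (d1 : ℝ) (d2 : ℝ) (d3 : ℝ) (d4 : ℝ) (d5 : ℝ) (d6 : ℝ) (d7 : ℝ) (d8 : ℝ) (d9 : ℝ) (d10 : ℝ) (d11 : ℝ) (d12 : ℝ) (d13 : ℝ) (d14 : ℝ) (d15 : ℝ) : mk16 d0 d1 d2 d3 d4 d5 d6 d7 d8 d9 d10 d11 d12 d13 d14 d15 8 = d8 := rfl
@[simp] lemma mk16_9 (d0 : ℝ) (d1 : ℝ) (d2 : ℝ) (d3 : ℝ) (d4 : ℝ) (d5 : ℝ) (d6 : ℝ) (d7 : ℝ) (d8 : ℝ) (d9 : ℝ) (d10 : ℝ) (d11 : ℝ) (d12 : ℝ) (d13 : ℝ) (d14 : ℝ) (d15 : ℝ) : mk16 d0 d1 d2 d3 d4 d5 d6 d7 d8 d9 d10 d11 d12 d13 d14 d15 9 = d9 := rfl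
@[simp] lemma mk16_10 (d0 : ℝ) (d1 : ℝ) (d2 : ℝ) (d3 : ℝ) (d4 : ℝ) (d5 : ℝ) (d6 : ℝ) (d7 : ℝ) (d8 : ℝ) (d9 : ℝ) (d10 : ℝ) (d11 : ℝ) (d12 : ℝ) (d13 : ℝ) (d14 : ℝ) (d15 : ℝ) : mk16 d0 d1 d2 d3 d4 d5 d6 d7 d8 d9 d10 d11 d12 d13 d14 d15 10 = d10 := rfl
@[simp] lemma mk16_11 (d0 : ℝ) (d1 : ℝ) (d2 : ℝ) (d3 : ℝ) (d4 : ℝ) (d5 : ℝ) (d6 : ℝ) (d7 : ℝ) (d8 : ℝ) (d9 : ℝ) (d10 : ℝ) (d11 : ℝ) (d12 : ℝ) (d13 : ℝ) (d14 : ℝ) (d15 : ℝ) : mk16 d0 d1 d2 d3 d4 d5 d6 d7 d8 d9 d10 d11 d12 d13 d14 d15 11 = d11 := rfl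
@[simp] lemma mk16_12 (d0 : ℝ) (d1 : ℝ) (d2 : ℝ) (d3 : ℝ) (d4 : ℝ) (d5 : ℝ) (d6 : ℝ) (d7 : ℝ) (d8 : ℝ) (d9 : ℝ) (d10 : ℝ) (d11 : ℝ) (d12 : ℝ) (d13 : ℝ) (d14 : ℝ) (d15 : ℝ) : mk16 d0 d1 d2 d3 d4 d5 d6 d7 d8 d9 d10 d11 d12 d13 d14 d15 12 = d12 := rfl
@[simp] lemma mk16_13 (d0 : ℝ) (d1 : ℝ) (d2 : ℝ) (d3 : ℝ) (d4 : ℝ) (d5 : ℝ) (d6 : ℝ) (d7 : ℝ) (d8 : ℝ) (d9 : ℝ) (d10 : ℝ) (d11 : ℝ) (d12 : ℝ) (d13 : ℝ) (d14 : ℝ) (d15 : ℝ) : mk16 d0 d1 d2 d3 d4 d5 d6 d7 d8 d9 d10 d11 d12 d13 d14 d15 13 = d13 := rfl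
@[simp] lemma mk16_14 (d0 : ℝ) (d1 : ℝ) (d2 : ℝ) (d3 : ℝ) (d4 : ℝ) (d5 : ℝ) (d6 : ℝ) (d7 : ℝ) (d8 : ℝ) (d9 : ℝ) (d10 : ℝ) (d11 : ℝ) (d12 : ℝ) (d13 : ℝ) (d14 : ℝ) (d15 : ℝ) : mk16 d0 d1 d2 d3 d4 d5 d6 d7 d8 d9 d10 d11 d12 d13 d14 d15 14 = d14 := rfl
@[simp] lemma mk16_15 (d0 : ℝ) (d1 : ℝ) (d2 : ℝ) (d3 : ℝ) (d4 : ℝ) (d5 : ℝ) (d6 : ℝ) (d7 : ℝ) (d8 : ℝ) (d9 : ℝ) (d10 : ℝ) (d11 : ℝ) (d12 : ℝ) (d13 : ℝ) (d14 : ℝ) (d15 : ℝ) : mk16 d0 d1 d2 d3 d4 d5 d6 d7 d8 d9 d10 d11 d12 d13 d14 d15 15 = d15 := rfl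

lemma key (m : Fin 4 → ℕ) :
    USmall (mu m) ↔ ∃ d0 d1 d2 d3 d4 d5 d6 d7 d8 d9 d10 d11 d12 d13 d14 d15 : ℝ,
      (0 ≤ d0 ∧ d0 ≤ 1) ∧ (0 ≤ d1 ∧ d1 ≤ 1) ∧ (0 ≤ d2 ∧ d2 ≤ 1) ∧ (0 ≤ d3 ∧ d3 ≤ 1) ∧ (0 ≤ d4 ∧ d4 ≤ 1) ∧ (0 ≤ d5 ∧ d5 ≤ 1) ∧ (0 ≤ d6 ∧ d6 ≤ 1) ∧ (0 ≤ d7 ∧ d7 ≤ 1) ∧ (0 ≤ d8 ∧ d8 ≤ 1) ∧ (0 ≤ d9 ∧ d9 ≤ 1) ∧ (0 ≤ d10 ∧ d10 ≤ 1) ∧ (0 ≤ d11 ∧ d11 ≤ 1) ∧ (0 ≤ d12 ∧ d12 ≤ 1) ∧ (0 ≤ d13 ∧ d13 ≤ 1) ∧ (0 ≤ d14 ∧ d14 ≤ 1) ∧ (0 ≤ d15 ∧ d15 ≤ 1) ∧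
      (- d0 + d1 - d2 + d3 - d4 + d5 - d6 + d7 - d8 + d9 - d10 + d11 - d12 + d13 - d14 + d15 = 2*(m 0:ℝ) + 2*(m 1) + 2*(m 2) + (m 3)) ∧
      (- d0 - d1 + d2 + d3 - d4 - d5 + d6 + d7 - d8 - d9 + d10 + d11 - d12 - d13 + d14 + d15 = 2*(m 1:ℝ) + 2*(m 2) + (m 3)) ∧
      (- d0 - d1 - d2 - d3 + d4 + d5 + d6 + d7 - d8 - d9 - d10 - d11 + d12 + d13 + d14 + d15 = 2*(m 2:ℝ) + (m 3)) ∧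
      (- d0 - d1 - d2 - d3 - d4 - d5 - d6 - d7 + d8 + d9 + d10 + d11 + d12 + d13 + d14 + d15 = (m 3:ℝ)) := by
  rw [usmall_iff]
  constructor
  · rintro ⟨d, hd, heq⟩
    refine ⟨d 0, d 1, d 2, d 3, d 4, d 5, d 6, d 7, d 8, d 9, d 10, d 11, d 12, d 13, d 14, d 15,
      hd 0, hd 1, hd 2, hd 3, hd 4, hd 5, hd 6, hd 7, hd 8, hd 9, hd 10, hd 11, hd 12, hd 13,
      hd 14, hd 15, ?_, ?_, ?_, ?_⟩ <;>
    · obtain ⟨h0, h1, h2, h3⟩ := mu_apply m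
      first
      | (have hj := congrArg (fun v : V4 => v 0) heq
         rw [show (mu m 0 = (∑ k, d k • w k) 0) from hj, sumw, sum16] at h0
         simp +decide only [w_apply] at h0
         norm_num at h0
         linarith)
      | (have hj := congrArg (fun v : V4 => v 1) heq
         rw [show (mu m 1 = (∑ k, d k • w k) 1) from hj, sumw, sum16] at h1
         simp +decide only [w_apply] at h1
         norm_num at h1
         linarith)
      | (have hj := congrArg (fun v : V4 => v 2) heq
         rw [show (mu m 2 = (∑ k, d k • w k) 2) from hj, sumw, sum16] at h2
         simp +decide only [w_apply] at h2
         norm_num at h2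
         linarith)
      | (have hj := congrArg (fun v : V4 => v 3) heq
         rw [show (mu m 3 = (∑ k, d k • w k) 3) from hj, sumw, sum16] at h3
         simp +decide only [w_apply] at h3
         norm_num at h3
         linarith)
  · rintro ⟨d0, d1, d2, d3, d4, d5, d6, d7, d8, d9, d10, d11, d12, d13, d14, d15,
      hb0, hb1, hb2, hb3, hb4, hb5, hb6, hb7, hb8, hb9, hb10, hb11, hb12, hb13, hb14, hb15, hE0, hE1, hE2, hE3⟩
    refine ⟨mk16 d0 d1 d2 d3 d4 d5 d6 d7 d8 d9 d10 d11 d12 d13 d14 d15, ?_, ?_⟩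
    · intro k
      fin_cases k
      · exact hb0
      · exact hb1
      · exact hb2
      · exact hb3
      · exact hb4
      · exact hb5
      · exact hb6
      · exact hb7
      · exact hb8
      · exact hb9
      · exact hb10
      · exact hb11
      · exact hb12
      · exact hb13
      · exact hb14
      · exact hb15
    · obtain ⟨h0, h1, h2, h3⟩ := mu_apply m
      apply V4_ext <;>
      · rw [sumw, sum16]
        first | rw [h0] | rw [h1] | rw [h2] | rw [h3]
        simp +decide only [w_apply, mk16_0, mk16_1, mk16_2, mk16_3, mk16_4, mk16_5, mk16_6,
          mk16_7, mk16_8, mk16_9, mk16_10, mk16_11, mk16_12, mk16_13, mk16_14, mk16_15, ite_true, ite_false]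
        linarith
def Fset : Finset (Fin 4 → ℕ) := {![0, 0, 0, 0], ![0, 0, 0, 1], ![0, 0, 0, 2], ![0, 0, 0, 3], ![0, 0, 1, 0], ![0, 0, 1, 1], ![0, 0, 2, 0], ![0, 1, 0, 0], ![0, 1, 0, 1], ![0, 1, 0, 2], ![0, 1, 1, 0], ![0, 2, 0, 0], ![1, 0, 0, 0], ![1, 0, 0, 1], ![1, 0, 0, 2], ![1, 0, 1, 0], ![1, 0, 1, 1], ![1, 1, 0, 0], ![1, 1, 0, 1], ![2, 0, 0, 0], ![2, 0, 0, 1], ![2, 0, 0, 2], ![2, 0, 1, 0], ![2, 1, 0, 0], ![3, 0, 0, 0], ![3, 0, 0, 1], ![4, 0, 0, 0]}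

lemma mem_helper {x y : Fin 4 → ℕ} {s : Finset (Fin 4 → ℕ)} (h : y ∈ s) (hxy : x = y) :
    x ∈ s := by rw [hxy]; exact h

set_option maxHeartbeats 4000000 in
lemma usmall_mem_iff (m : Fin 4 → ℕ) : USmall (mu m) ↔ m ∈ Fset := by
  rw [key]
  constructor
  · rintro ⟨d0, d1, d2, d3, d4, d5, d6, d7, d8, d9, d10, d11, d12, d13, d14, d15,
      hb0, hb1, hb2, hb3, hb4, hb5, hb6, hb7, hb8, hb9, hb10, hb11, hb12, hb13, hb14, hb15, hE0, hE1, hE2, hE3⟩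
    have hR : (m 0 : ℝ) + 2 * (m 1) + 3 * (m 2) + 2 * (m 3) ≤ 6 := by linarith
    have hN : m 0 + 2 * m 1 + 3 * m 2 + 2 * m 3 ≤ 6 := by exact_mod_cast hR
    refine mem_helper ?_ (show m = ![m 0, m 1, m 2, m 3] from by
      funext j; fin_cases j <;> rfl)
    push_cast at hE0 hE1 hE2 hE3
    set a := m 0 with ha
    set b := m 1 with hb
    set c := m 2 with hc
    set g := m 3 with hg
    have Ha : a ≤ 6 := by omega
    have Hb : b ≤ 3 := by omega
    have Hc : c ≤ 2 := by omega
    have Hg : g ≤ 3 := by omega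
    clear ha hb hc hg
    interval_cases a <;> interval_cases b <;> interval_cases c <;> interval_cases g <;>
      first
      | (exfalso; omega)
      | (exact by decide)
      | (exfalso; norm_num at hE0 hE1 hE2 hE3; linarith)
  · intro h
    fin_cases h
    · refine ⟨(1/2 : ℝ), (1/2 : ℝ), (1/2 : ℝ), (1/2 : ℝ), (1/2 : ℝ), (1/2 : ℝ), (1/2 : ℝ), (1/2 : ℝ), (1/2 : ℝ), (1/2 : ℝ), (1/2 : ℝ), (1/2 : ℝ), (1/2 : ℝ), (1/2 : ℝ), (1/2 : ℝ), (1/2 : ℝ), ?_, ?_, ?_, ?_, ?_, ?_, ?_, ?_, ?_, ?_, ?_, ?_, ?_, ?_, ?_, ?_, ?_, ?_, ?_, ?_⟩ <;> norm_num [Matrix.cons_val_two, Matrix.cons_val_three]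
    · refine ⟨(1/4 : ℝ), (3/8 : ℝ), (3/8 : ℝ), (1/2 : ℝ), (3/8 : ℝ), (1/2 : ℝ), (1/2 : ℝ), (5/8 : ℝ), (3/8 : ℝ), (1/2 : ℝ), (1/2 : ℝ), (5/8 : ℝ), (1/2 : ℝ), (5/8 : ℝ), (5/8 : ℝ), (3/4 : ℝ), ?_, ?_, ?_, ?_, ?_, ?_, ?_, ?_, ?_, ?_, ?_, ?_, ?_, ?_, ?_, ?_, ?_, ?_, ?_, ?_⟩ <;> norm_num [Matrix.cons_val_two, Matrix.cons_val_three]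
    · refine ⟨(0 : ℝ), (1/4 : ℝ), (1/4 : ℝ), (1/2 : ℝ), (1/4 : ℝ), (1/2 : ℝ), (1/2 : ℝ), (3/4 : ℝ), (1/4 : ℝ), (1/2 : ℝ), (1/2 : ℝ), (3/4 : ℝ), (1/2 : ℝ), (3/4 : ℝ), (3/4 : ℝ), (1 : ℝ), ?_, ?_, ?_, ?_, ?_, ?_, ?_, ?_, ?_, ?_, ?_, ?_, ?_, ?_, ?_, ?_, ?_, ?_, ?_, ?_⟩ <;> norm_num [Matrix.cons_val_two, Matrix.cons_val_three]
    · refine ⟨(0 : ℝ), (0 : ℝ), (0 : ℝ), (1 : ℝ), (0 : ℝ), (1 : ℝ), (1 : ℝ), (1 : ℝ), (0 : ℝ), (1 : ℝ), (1 : ℝ), (1 : ℝ), (1 : ℝ), (1 : ℝ), (1 : ℝ), (1 : ℝ), ?_, ?_, ?_, ?_, ?_, ?_, ?_, ?_, ?_, ?_, ?_, ?_, ?_, ?_, ?_, ?_, ?_, ?_, ?_, ?_⟩ <;> norm_num [Matrix.cons_val_two, Matrix.cons_val_three]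
    · refine ⟨(1/8 : ℝ), (3/8 : ℝ), (3/8 : ℝ), (5/8 : ℝ), (3/8 : ℝ), (5/8 : ℝ), (5/8 : ℝ), (7/8 : ℝ), (1/8 : ℝ), (3/8 : ℝ), (3/8 : ℝ), (5/8 : ℝ), (3/8 : ℝ), (5/8 : ℝ), (5/8 : ℝ), (7/8 : ℝ), ?_, ?_, ?_, ?_, ?_, ?_, ?_, ?_, ?_, ?_, ?_, ?_, ?_, ?_, ?_, ?_, ?_, ?_, ?_, ?_⟩ <;> norm_num [Matrix.cons_val_two, Matrix.cons_val_three]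
    · refine ⟨(0 : ℝ), (0 : ℝ), (0 : ℝ), (1 : ℝ), (0 : ℝ), (1 : ℝ), (1 : ℝ), (0 : ℝ), (0 : ℝ), (0 : ℝ), (0 : ℝ), (1 : ℝ), (0 : ℝ), (1 : ℝ), (1 : ℝ), (1 : ℝ), ?_, ?_, ?_, ?_, ?_, ?_, ?_, ?_, ?_, ?_, ?_, ?_, ?_, ?_, ?_, ?_, ?_, ?_, ?_, ?_⟩ <;> norm_num [Matrix.cons_val_two, Matrix.cons_val_three]
    · refine ⟨(0 : ℝ), (0 : ℝ), (0 : ℝ), (1 : ℝ), (0 : ℝ), (1 : ℝ), (1 : ℝ), (1 : ℝ), (0 : ℝ), (0 : ℝ), (0 : ℝ), (1 : ℝ), (0 : ℝ), (1 : ℝ), (1 : ℝ), (1 : ℝ), ?_, ?_, ?_, ?_, ?_, ?_, ?_, ?_, ?_, ?_, ?_, ?_, ?_, ?_, ?_, ?_, ?_, ?_, ?_, ?_⟩ <;> norm_num [Matrix.cons_val_two, Matrix.cons_val_three]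
    · refine ⟨(1/4 : ℝ), (1/2 : ℝ), (1/2 : ℝ), (3/4 : ℝ), (1/4 : ℝ), (1/2 : ℝ), (1/2 : ℝ), (3/4 : ℝ), (1/4 : ℝ), (1/2 : ℝ), (1/2 : ℝ), (3/4 : ℝ), (1/4 : ℝ), (1/2 : ℝ), (1/2 : ℝ), (3/4 : ℝ), ?_, ?_, ?_, ?_, ?_, ?_, ?_, ?_, ?_, ?_, ?_, ?_, ?_, ?_, ?_, ?_, ?_, ?_, ?_, ?_⟩ <;> norm_num [Matrix.cons_val_two, Matrix.cons_val_three]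
    · refine ⟨(0 : ℝ), (3/8 : ℝ), (3/8 : ℝ), (3/4 : ℝ), (1/8 : ℝ), (1/2 : ℝ), (1/2 : ℝ), (7/8 : ℝ), (1/8 : ℝ), (1/2 : ℝ), (1/2 : ℝ), (7/8 : ℝ), (1/4 : ℝ), (5/8 : ℝ), (5/8 : ℝ), (1 : ℝ), ?_, ?_, ?_, ?_, ?_, ?_, ?_, ?_, ?_, ?_, ?_, ?_, ?_, ?_, ?_, ?_, ?_, ?_, ?_, ?_⟩ <;> norm_num [Matrix.cons_val_two, Matrix.cons_val_three]
    · refine ⟨(0 : ℝ), (0 : ℝ), (0 : ℝ), (1 : ℝ), (0 : ℝ), (1 : ℝ), (1 : ℝ), (1 : ℝ), (0 : ℝ), (1 : ℝ), (1 : ℝ), (1 : ℝ), (0 : ℝ), (1 : ℝ), (1 : ℝ), (1 : ℝ), ?_, ?_, ?_, ?_, ?_, ?_, ?_, ?_, ?_, ?_, ?_, ?_, ?_, ?_, ?_, ?_, ?_, ?_, ?_, ?_⟩ <;> norm_num [Matrix.cons_val_two, Matrix.cons_val_three]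
    · refine ⟨(0 : ℝ), (0 : ℝ), (0 : ℝ), (1 : ℝ), (0 : ℝ), (1 : ℝ), (1 : ℝ), (1 : ℝ), (0 : ℝ), (1 : ℝ), (0 : ℝ), (1 : ℝ), (0 : ℝ), (0 : ℝ), (1 : ℝ), (1 : ℝ), ?_, ?_, ?_, ?_, ?_, ?_, ?_, ?_, ?_, ?_, ?_, ?_, ?_, ?_, ?_, ?_, ?_, ?_, ?_, ?_⟩ <;> norm_num [Matrix.cons_val_two, Matrix.cons_val_three]
    · refine ⟨(0 : ℝ), (1/2 : ℝ), (1/2 : ℝ), (1 : ℝ), (0 : ℝ), (1/2 : ℝ), (1/2 : ℝ), (1 : ℝ), (0 : ℝ), (1/2 : ℝ), (1/2 : ℝ), (1 : ℝ), (0 : ℝ), (1/2 : ℝ), (1/2 : ℝ), (1 : ℝ), ?_, ?_, ?_, ?_, ?_, ?_, ?_, ?_, ?_, ?_, ?_, ?_, ?_, ?_, ?_, ?_, ?_, ?_, ?_, ?_⟩ <;> norm_num [Matrix.cons_val_two, Matrix.cons_val_three]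
    · refine ⟨(3/8 : ℝ), (5/8 : ℝ), (3/8 : ℝ), (5/8 : ℝ), (3/8 : ℝ), (5/8 : ℝ), (3/8 : ℝ), (5/8 : ℝ), (3/8 : ℝ), (5/8 : ℝ), (3/8 : ℝ), (5/8 : ℝ), (3/8 : ℝ), (5/8 : ℝ), (3/8 : ℝ), (5/8 : ℝ), ?_, ?_, ?_, ?_, ?_, ?_, ?_, ?_, ?_, ?_, ?_, ?_, ?_, ?_, ?_, ?_, ?_, ?_, ?_, ?_⟩ <;> norm_num [Matrix.cons_val_two, Matrix.cons_val_three]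
    · refine ⟨(1/8 : ℝ), (1/2 : ℝ), (1/4 : ℝ), (5/8 : ℝ), (1/4 : ℝ), (5/8 : ℝ), (3/8 : ℝ), (3/4 : ℝ), (1/4 : ℝ), (5/8 : ℝ), (3/8 : ℝ), (3/4 : ℝ), (3/8 : ℝ), (3/4 : ℝ), (1/2 : ℝ), (7/8 : ℝ), ?_, ?_, ?_, ?_, ?_, ?_, ?_, ?_, ?_, ?_, ?_, ?_, ?_, ?_, ?_, ?_, ?_, ?_, ?_, ?_⟩ <;> norm_num [Matrix.cons_val_two, Matrix.cons_val_three]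
    · refine ⟨(0 : ℝ), (0 : ℝ), (0 : ℝ), (1 : ℝ), (0 : ℝ), (0 : ℝ), (0 : ℝ), (1 : ℝ), (0 : ℝ), (1 : ℝ), (0 : ℝ), (0 : ℝ), (0 : ℝ), (1 : ℝ), (1 : ℝ), (1 : ℝ), ?_, ?_, ?_, ?_, ?_, ?_, ?_, ?_, ?_, ?_, ?_, ?_, ?_, ?_, ?_, ?_, ?_, ?_, ?_, ?_⟩ <;> norm_num [Matrix.cons_val_two, Matrix.cons_val_three]
    · refine ⟨(0 : ℝ), (1/2 : ℝ), (1/4 : ℝ), (3/4 : ℝ), (1/4 : ℝ), (3/4 : ℝ), (1/2 : ℝ), (1 : ℝ), (0 : ℝ), (1/2 : ℝ), (1/4 : ℝ), (3/4 : ℝ), (1/4 : ℝ), (3/4 : ℝ), (1/2 : ℝ), (1 : ℝ), ?_, ?_, ?_, ?_, ?_, ?_, ?_, ?_, ?_, ?_, ?_, ?_, ?_, ?_, ?_, ?_, ?_, ?_, ?_, ?_⟩ <;> norm_num [Matrix.cons_val_two, Matrix.cons_val_three]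
    · refine ⟨(0 : ℝ), (0 : ℝ), (0 : ℝ), (1 : ℝ), (0 : ℝ), (1 : ℝ), (1 : ℝ), (1 : ℝ), (0 : ℝ), (1 : ℝ), (0 : ℝ), (1 : ℝ), (0 : ℝ), (1 : ℝ), (1 : ℝ), (1 : ℝ), ?_, ?_, ?_, ?_, ?_, ?_, ?_, ?_, ?_, ?_, ?_, ?_, ?_, ?_, ?_, ?_, ?_, ?_, ?_, ?_⟩ <;> norm_num [Matrix.cons_val_two, Matrix.cons_val_three]
    · refine ⟨(1/8 : ℝ), (5/8 : ℝ), (3/8 : ℝ), (7/8 : ℝ), (1/8 : ℝ), (5/8 : ℝ), (3/8 : ℝ), (7/8 : ℝ), (1/8 : ℝ), (5/8 : ℝ), (3/8 : ℝ), (7/8 : ℝ), (1/8 : ℝ), (5/8 : ℝ), (3/8 : ℝ), (7/8 : ℝ), ?_, ?_, ?_, ?_, ?_, ?_, ?_, ?_, ?_, ?_, ?_, ?_, ?_, ?_, ?_, ?_, ?_, ?_, ?_, ?_⟩ <;> norm_num [Matrix.cons_val_two, Matrix.cons_val_three]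
    · refine ⟨(0 : ℝ), (0 : ℝ), (0 : ℝ), (1 : ℝ), (0 : ℝ), (1 : ℝ), (0 : ℝ), (1 : ℝ), (0 : ℝ), (1 : ℝ), (0 : ℝ), (1 : ℝ), (0 : ℝ), (0 : ℝ), (1 : ℝ), (1 : ℝ), ?_, ?_, ?_, ?_, ?_, ?_, ?_, ?_, ?_, ?_, ?_, ?_, ?_, ?_, ?_, ?_, ?_, ?_, ?_, ?_⟩ <;> norm_num [Matrix.cons_val_two, Matrix.cons_val_three]
    · refine ⟨(1/4 : ℝ), (3/4 : ℝ), (1/4 : ℝ), (3/4 : ℝ), (1/4 : ℝ), (3/4 : ℝ), (1/4 : ℝ), (3/4 : ℝ), (1/4 : ℝ), (3/4 : ℝ), (1/4 : ℝ), (3/4 : ℝ), (1/4 : ℝ), (3/4 : ℝ), (1/4 : ℝ), (3/4 : ℝ), ?_, ?_, ?_, ?_, ?_, ?_, ?_, ?_, ?_, ?_, ?_, ?_, ?_, ?_, ?_, ?_, ?_, ?_, ?_, ?_⟩ <;> norm_num [Matrix.cons_val_two, Matrix.cons_val_three]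
    · refine ⟨(0 : ℝ), (5/8 : ℝ), (1/8 : ℝ), (3/4 : ℝ), (1/8 : ℝ), (3/4 : ℝ), (1/4 : ℝ), (7/8 : ℝ), (1/8 : ℝ), (3/4 : ℝ), (1/4 : ℝ), (7/8 : ℝ), (1/4 : ℝ), (7/8 : ℝ), (3/8 : ℝ), (1 : ℝ), ?_, ?_, ?_, ?_, ?_, ?_, ?_, ?_, ?_, ?_, ?_, ?_, ?_, ?_, ?_, ?_, ?_, ?_, ?_, ?_⟩ <;> norm_num [Matrix.cons_val_two, Matrix.cons_val_three]
    · refine ⟨(0 : ℝ), (0 : ℝ), (0 : ℝ), (1 : ℝ), (0 : ℝ), (1 : ℝ), (0 : ℝ), (1 : ℝ), (0 : ℝ), (1 : ℝ), (0 : ℝ), (1 : ℝ), (0 : ℝ), (1 : ℝ), (1 : ℝ), (1 : ℝ), ?_, ?_, ?_, ?_, ?_, ?_, ?_, ?_, ?_, ?_, ?_, ?_, ?_, ?_, ?_, ?_, ?_, ?_, ?_, ?_⟩ <;> norm_num [Matrix.cons_val_two, Matrix.cons_val_three]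
    · refine ⟨(0 : ℝ), (0 : ℝ), (0 : ℝ), (1 : ℝ), (0 : ℝ), (1 : ℝ), (0 : ℝ), (1 : ℝ), (0 : ℝ), (0 : ℝ), (0 : ℝ), (1 : ℝ), (0 : ℝ), (1 : ℝ), (0 : ℝ), (1 : ℝ), ?_, ?_, ?_, ?_, ?_, ?_, ?_, ?_, ?_, ?_, ?_, ?_, ?_, ?_, ?_, ?_, ?_, ?_, ?_, ?_⟩ <;> norm_num [Matrix.cons_val_two, Matrix.cons_val_three]
    · refine ⟨(0 : ℝ), (3/4 : ℝ), (1/4 : ℝ), (1 : ℝ), (0 : ℝ), (3/4 : ℝ), (1/4 : ℝ), (1 : ℝ), (0 : ℝ), (3/4 : ℝ), (1/4 : ℝ), (1 : ℝ), (0 : ℝ), (3/4 : ℝ), (1/4 : ℝ), (1 : ℝ), ?_, ?_, ?_, ?_, ?_, ?_, ?_, ?_, ?_, ?_, ?_, ?_, ?_, ?_, ?_, ?_, ?_, ?_, ?_, ?_⟩ <;> norm_num [Matrix.cons_val_two, Matrix.cons_val_three]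
    · refine ⟨(1/8 : ℝ), (7/8 : ℝ), (1/8 : ℝ), (7/8 : ℝ), (1/8 : ℝ), (7/8 : ℝ), (1/8 : ℝ), (7/8 : ℝ), (1/8 : ℝ), (7/8 : ℝ), (1/8 : ℝ), (7/8 : ℝ), (1/8 : ℝ), (7/8 : ℝ), (1/8 : ℝ), (7/8 : ℝ), ?_, ?_, ?_, ?_, ?_, ?_, ?_, ?_, ?_, ?_, ?_, ?_, ?_, ?_, ?_, ?_, ?_, ?_, ?_, ?_⟩ <;> norm_num [Matrix.cons_val_two, Matrix.cons_val_three]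
    · refine ⟨(0 : ℝ), (0 : ℝ), (0 : ℝ), (1 : ℝ), (0 : ℝ), (1 : ℝ), (0 : ℝ), (1 : ℝ), (0 : ℝ), (1 : ℝ), (0 : ℝ), (1 : ℝ), (0 : ℝ), (1 : ℝ), (0 : ℝ), (1 : ℝ), ?_, ?_, ?_, ?_, ?_, ?_, ?_, ?_, ?_, ?_, ?_, ?_, ?_, ?_, ?_, ?_, ?_, ?_, ?_, ?_⟩ <;> norm_num [Matrix.cons_val_two, Matrix.cons_val_three]
    · refine ⟨(0 : ℝ), (1 : ℝ), (0 : ℝ), (1 : ℝ), (0 : ℝ), (1 : ℝ), (0 : ℝ), (1 : ℝ), (0 : ℝ), (1 : ℝ), (0 : ℝ), (1 : ℝ), (0 : ℝ), (1 : ℝ), (0 : ℝ), (1 : ℝ), ?_, ?_, ?_, ?_, ?_, ?_, ?_, ?_, ?_, ?_, ?_, ?_, ?_, ?_, ?_, ?_, ?_, ?_, ?_, ?_⟩ <;> norm_num [Matrix.cons_val_two, Matrix.cons_val_three]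

/-- Exactly 27 K-types `m₁ϖ₁+m₂ϖ₂+m₃ϖ₃+m₄ϖ₄` (with `(m₁,m₂,m₃,m₄) ∈ ℕ⁴`) of
F₄₍₋₂₀₎ are u-small. -/
theorem usmall_count_FII :
    {m : Fin 4 → ℕ | USmall (mu m)}.ncard = 27 := by
  have hset : {m : Fin 4 → ℕ | USmall (mu m)} = ↑Fset := by
    ext m
    exact usmall_mem_iff m
  rw [hset, Set.ncard_coe_finset]
  decide

end Stmt7
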